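/- arXiv:1901.08905 — 14 statements merged into one kernel-verified Lean document; each statement's English description precedes it below -/
import Mathlib

section
/- Let h, b ∈ ℝ³ be unit vectors with b ≠ h and b ≠ −h. Let c = √((1 + ⟪b,h⟫)/2) and s = √((1 − ⟪b,h⟫)/2). Then the unit quaternion r₁ = (c, s·(b × h)/‖b × h‖) satisfies the vector-measurement constraint r₁ ⊗ b̌ = ȟ ⊗ r₁, where b̌ and ȟ denote the pure quaternions with vector parts b and h. -/
set_option maxHeartbeats 1000000

open Real

theorem stmt2 (h₁ h₂ h₃ b₁ b₂ b₃ : ℝ)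
    (hh : h₁^2 + h₂^2 + h₃^2 = 1) (hb : b₁^2 + b₂^2 + b₃^2 = 1)
    (hne : ¬ (b₁ = h₁ ∧ b₂ = h₂ ∧ b₃ = h₃))
    (hne' : ¬ (b₁ = -h₁ ∧ b₂ = -h₂ ∧ b₃ = -h₃))
    (c s u₁ u₂ u₃ nu : ℝ)
    (hc : c = sqrt ((1 + (b₁*h₁ + b₂*h₂ + b₃*h₃))/2))
    (hs : s = sqrt ((1 - (b₁*h₁ + b₂*h₂ + b₃*h₃))/2))
    (hu₁ : u₁ = b₂*h₃ - b₃*h₂) (hu₂ : u₂ = b₃*h₁ - b₁*h₃) (hu₃ : u₃ = b₁*h₂ - b₂*h₁)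
    (hnu : nu = sqrt (u₁^2 + u₂^2 + u₃^2))
    (r₁ bc hc' : Quaternion ℝ)
    (hr₁ : r₁ = ⟨c, s * u₁ / nu, s * u₂ / nu, s * u₃ / nu⟩)
    (hbc : bc = ⟨0, b₁, b₂, b₃⟩) (hhc : hc' = ⟨0, h₁, h₂, h₃⟩) :
    r₁ * bc = hc' * r₁ := by
  obtain ⟨d, hd⟩ : ∃ d, d = b₁*h₁ + b₂*h₂ + b₃*h₃ := ⟨_, rfl⟩
  rw [← hd] at hc hs
  have hd1 : 0 < 1 + d := by
    have key : 2 + 2*d = (b₁+h₁)^2 + (b₂+h₂)^2 + (b₃+h₃)^2 := by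
      rw [hd]; linear_combination -hh - hb
    rcases lt_or_eq_of_le (by positivity : (0:ℝ) ≤ (b₁+h₁)^2 + (b₂+h₂)^2 + (b₃+h₃)^2) with hlt | heq
    · linarith
    · exfalso; apply hne'
      have n1 := sq_nonneg (b₁+h₁); have n2 := sq_nonneg (b₂+h₂); have n3 := sq_nonneg (b₃+h₃)
      have e1 : b₁+h₁ = 0 := by
        have : (b₁+h₁)^2 = 0 := by linarith
        exact pow_eq_zero_iff (two_ne_zero) |>.1 this
      have e2 : b₂+h₂ = 0 := by
        have : (b₂+h₂)^2 = 0 := by linarith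
        exact pow_eq_zero_iff (two_ne_zero) |>.1 this
      have e3 : b₃+h₃ = 0 := by
        have : (b₃+h₃)^2 = 0 := by linarith
        exact pow_eq_zero_iff (two_ne_zero) |>.1 this
      exact ⟨by linarith, by linarith, by linarith⟩
  have hd2 : 0 < 1 - d := by
    have key : 2 - 2*d = (b₁-h₁)^2 + (b₂-h₂)^2 + (b₃-h₃)^2 := by
      rw [hd]; linear_combination -hh - hb
    rcases lt_or_eq_of_le (by positivity : (0:ℝ) ≤ (b₁-h₁)^2 + (b₂-h₂)^2 + (b₃-h₃)^2) with hlt | heq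
    · linarith
    · exfalso; apply hne
      have n1 := sq_nonneg (b₁-h₁); have n2 := sq_nonneg (b₂-h₂); have n3 := sq_nonneg (b₃-h₃)
      have e1 : b₁-h₁ = 0 := by
        have : (b₁-h₁)^2 = 0 := by linarith
        exact pow_eq_zero_iff (two_ne_zero) |>.1 this
      have e2 : b₂-h₂ = 0 := by
        have : (b₂-h₂)^2 = 0 := by linarith
        exact pow_eq_zero_iff (two_ne_zero) |>.1 this
      have e3 : b₃-h₃ = 0 := by
        have : (b₃-h₃)^2 = 0 := by linarith
        exact pow_eq_zero_iff (two_ne_zero) |>.1 this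
      exact ⟨by linarith, by linarith, by linarith⟩
  have husum : u₁^2 + u₂^2 + u₃^2 = 1 - d^2 := by
    rw [hu₁, hu₂, hu₃, hd]; nlinarith [hh, hb]
  have hnupos : 0 < nu := by
    rw [hnu]; apply Real.sqrt_pos.2; rw [husum]; nlinarith
  have hnu2 : nu^2 = 1 - d^2 := by
    rw [hnu, sq_sqrt (by rw [husum]; nlinarith)]; exact husum
  have hcpos : 0 < c := by rw [hc]; apply Real.sqrt_pos.2; linarith
  have hspos : 0 < s := by rw [hs]; apply Real.sqrt_pos.2; linarith
  have hc2 : c^2 = (1+d)/2 := by rw [hc, sq_sqrt (by linarith)]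
  have hs2 : s^2 = (1-d)/2 := by rw [hs, sq_sqrt (by linarith)]
  have hcs : nu = 2*(c*s) := by
    have hz : (nu - 2*(c*s)) * (nu + 2*(c*s)) = 0 := by
      have : nu^2 = 4*(c^2*s^2) := by rw [hnu2, hc2, hs2]; ring
      linear_combination this
    rcases mul_eq_zero.1 hz with h' | h'
    · linarith
    · have := mul_pos hcpos hspos; linarith
  subst hr₁ hbc hhc hu₁ hu₂ hu₃
  ext
  · erw [QuaternionAlgebra.re_mul, QuaternionAlgebra.re_mul]; dsimp only
    ring
  · erw [QuaternionAlgebra.imI_mul, QuaternionAlgebra.imI_mul]; dsimp only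
    field_simp [hnupos.ne']
    linear_combination (c*(b₁-h₁))*hcs + (2*s*(b₁-h₁))*hc2 + (s*(b₁-h₁))*hd - (s*b₁)*hh + (s*h₁)*hb
  · erw [QuaternionAlgebra.imJ_mul, QuaternionAlgebra.imJ_mul]; dsimp only
    field_simp [hnupos.ne']
    linear_combination (c*(b₂-h₂))*hcs + (2*s*(b₂-h₂))*hc2 + (s*(b₂-h₂))*hd - (s*b₂)*hh + (s*h₂)*hb
  · erw [QuaternionAlgebra.imK_mul, QuaternionAlgebra.imK_mul]; dsimp only
    field_simp [hnupos.ne']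
    linear_combination (c*(b₃-h₃))*hcs + (2*s*(b₃-h₃))*hc2 + (s*(b₃-h₃))*hd - (s*b₃)*hh + (s*h₃)*hb
end

section
/- Let h, b ∈ ℝ³ be unit vectors, and let p, q be unit quaternions both satisfying the constraint x ⊗ b̌ = ȟ ⊗ x. Then p ⊗ q⁻¹ is a rotation about h: there exist real c, s with c² + s² = 1 such that p ⊗ q⁻¹ = (c, s·h). -/
theorem stmt5 (h₁ h₂ h₃ b₁ b₂ b₃ : ℝ)
    (hh : h₁^2 + h₂^2 + h₃^2 = 1) (hb : b₁^2 + b₂^2 + b₃^2 = 1)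
    (bc hc' : Quaternion ℝ)
    (hbc : bc = ⟨0, b₁, b₂, b₃⟩) (hhc : hc' = ⟨0, h₁, h₂, h₃⟩)
    (p q : Quaternion ℝ) (hp : ‖p‖ = 1) (hq : ‖q‖ = 1)
    (hpc : p * bc = hc' * p)
    (hqc : q * bc = hc' * q) :
    ∃ c s : ℝ, c^2 + s^2 = 1 ∧
      p * star q = (⟨c, s * h₁, s * h₂, s * h₃⟩ : Quaternion ℝ) := by
  have hsb : star bc = -bc := by
    ext <;> simp <;> rw [hbc] <;> simp
  have hsh : star hc' = -hc' := by
    ext <;> simp <;> rw [hhc] <;> simp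
  have hq' : star q * hc' = bc * star q := by
    have h1 := congrArg star hqc
    rw [star_mul, star_mul, hsb, hsh, neg_mul, mul_neg, neg_inj] at h1
    exact h1.symm
  have hr : (p * star q) * hc' = hc' * (p * star q) := by
    rw [mul_assoc, hq', ← mul_assoc, hpc, mul_assoc]
  set r := p * star q with hrdef
  have hn : Quaternion.normSq r = 1 := by
    rw [Quaternion.normSq_eq_norm_mul_self, norm_mul, norm_star, hp, hq]; ring
  have hn' : r.re^2 + r.imI^2 + r.imJ^2 + r.imK^2 = 1 := by
    rw [← Quaternion.normSq_def', hn]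
  rw [Quaternion.ext_iff] at hr
  obtain ⟨e1, e2, e3, e4⟩ := hr
  simp only [Quaternion.re_mul, Quaternion.imI_mul, Quaternion.imJ_mul,
    Quaternion.imK_mul] at e1 e2 e3 e4
  subst hhc
  dsimp only at e1 e2 e3 e4
  set a := r.re
  set x := r.imI
  set y := r.imJ
  set z := r.imK
  have c12 : x * h₂ = y * h₁ := by linarith
  have c13 : x * h₃ = z * h₁ := by linarith
  have c23 : y * h₃ = z * h₂ := by linarith
  have hx : x = (x * h₁ + y * h₂ + z * h₃) * h₁ := by
    linear_combination (-x) * hh + h₂ * c12 + h₃ * c13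
  have hy : y = (x * h₁ + y * h₂ + z * h₃) * h₂ := by
    linear_combination (-y) * hh - h₁ * c12 + h₃ * c23
  have hz : z = (x * h₁ + y * h₂ + z * h₃) * h₃ := by
    linear_combination (-z) * hh - h₁ * c13 - h₂ * c23
  refine ⟨a, x * h₁ + y * h₂ + z * h₃, ?_, ?_⟩
  · linear_combination hn' - x * hx - y * hy - z * hz
  · ext
    · rfl
    · exact hx
    · exact hy
    · exact hz
end

section
/- Let h, b ∈ ℝ³ be unit vectors with b ≠ ±h, let c = √((1+⟪b,h⟫)/2), s = √((1−⟪b,h⟫)/2), r₁ = (c, s·(b×h)/‖b×h‖), r₂ = (0, (b+h)/‖b+h‖). Then for any reals c', s' with c'² + s'² = 1, the quaternion q = c'·r₁ + s'·r₂ is a unit quaternion satisfying q ⊗ b̌ = ȟ ⊗ q. That is, every norm-constrained linear combination of the two special solutions lies in the feasibility cone. -/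
set_option maxHeartbeats 1000000
open Real

lemma aux_cs (h₁ h₂ h₃ b₁ b₂ b₃ : ℝ)
    (hh : h₁^2 + h₂^2 + h₃^2 = 1) (hb : b₁^2 + b₂^2 + b₃^2 = 1)
    (hne : ¬ (b₁ = h₁ ∧ b₂ = h₂ ∧ b₃ = h₃)) :
    b₁*h₁ + b₂*h₂ + b₃*h₃ < 1 := by
  by_contra hle
  push_neg at hle
  have e1 : (b₁-h₁)^2 = 0 := by nlinarith [sq_nonneg (b₂-h₂), sq_nonneg (b₃-h₃)]
  have e2 : (b₂-h₂)^2 = 0 := by nlinarith [sq_nonneg (b₁-h₁), sq_nonneg (b₃-h₃)]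
  have e3 : (b₃-h₃)^2 = 0 := by nlinarith [sq_nonneg (b₁-h₁), sq_nonneg (b₂-h₂)]
  exact hne ⟨by nlinarith, by nlinarith, by nlinarith⟩


open Real

theorem stmt6 (h₁ h₂ h₃ b₁ b₂ b₃ : ℝ)
    (hh : h₁^2 + h₂^2 + h₃^2 = 1) (hb : b₁^2 + b₂^2 + b₃^2 = 1)
    (hne : ¬ (b₁ = h₁ ∧ b₂ = h₂ ∧ b₃ = h₃))
    (hne' : ¬ (b₁ = -h₁ ∧ b₂ = -h₂ ∧ b₃ = -h₃))
    (c s u₁ u₂ u₃ nu ng : ℝ)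
    (hc : c = sqrt ((1 + (b₁*h₁ + b₂*h₂ + b₃*h₃))/2))
    (hs : s = sqrt ((1 - (b₁*h₁ + b₂*h₂ + b₃*h₃))/2))
    (hu₁ : u₁ = b₂*h₃ - b₃*h₂) (hu₂ : u₂ = b₃*h₁ - b₁*h₃) (hu₃ : u₃ = b₁*h₂ - b₂*h₁)
    (hnu : nu = sqrt (u₁^2 + u₂^2 + u₃^2))
    (hng : ng = sqrt ((b₁+h₁)^2 + (b₂+h₂)^2 + (b₃+h₃)^2))
    (r₁ r₂ bc hc' : Quaternion ℝ)
    (hr₁ : r₁ = ⟨c, s * u₁ / nu, s * u₂ / nu, s * u₃ / nu⟩)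
    (hr₂ : r₂ = ⟨0, (b₁+h₁)/ng, (b₂+h₂)/ng, (b₃+h₃)/ng⟩)
    (hbc : bc = ⟨0, b₁, b₂, b₃⟩) (hhc : hc' = ⟨0, h₁, h₂, h₃⟩)
    (c' s' : ℝ) (hcs : c'^2 + s'^2 = 1)
    (q : Quaternion ℝ) (hqdef : q = c' • r₁ + s' • r₂) :
    ‖q‖ = 1 ∧ q * bc = hc' * q := by
  set d := b₁*h₁ + b₂*h₂ + b₃*h₃ with hd
  have hd1 : d < 1 := aux_cs h₁ h₂ h₃ b₁ b₂ b₃ hh hb hne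
  have hd2 : -1 < d := by
    have := aux_cs (-h₁) (-h₂) (-h₃) b₁ b₂ b₃ (by ring_nf; linarith) hb
      (by rintro ⟨e1, e2, e3⟩; exact hne' ⟨e1, e2, e3⟩)
    rw [hd]; nlinarith [this]
  have hps : 0 < (b₁+h₁)^2 + (b₂+h₂)^2 + (b₃+h₃)^2 := by nlinarith
  have husum : u₁^2 + u₂^2 + u₃^2 = 1 - d^2 := by
    subst hu₁ hu₂ hu₃
    linear_combination (h₁^2+h₂^2+h₃^2) * hb + hh - (b₁*h₁ + b₂*h₂ + b₃*h₃ + 1) * hd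
  have hgsum : (b₁+h₁)^2 + (b₂+h₂)^2 + (b₃+h₃)^2 = 2 + 2*d := by
    linear_combination hb + hh
  have hnu2 : nu^2 = 1 - d^2 := by
    rw [hnu, Real.sq_sqrt (by rw [husum]; nlinarith)]; exact husum
  have hng2 : ng^2 = 2 + 2*d := by
    rw [hng, Real.sq_sqrt (le_of_lt hps)]; exact hgsum
  have hnupos : 0 < nu := by
    rw [hnu]; apply Real.sqrt_pos.mpr; rw [husum]; nlinarith
  have hngpos : 0 < ng := by rw [hng]; exact Real.sqrt_pos.mpr hps
  have hc2 : c^2 = (1+d)/2 := by rw [hc, Real.sq_sqrt (by linarith)]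
  have hs2 : s^2 = (1-d)/2 := by rw [hs, Real.sq_sqrt (by linarith)]
  have hc0 : 0 ≤ c := by rw [hc]; exact Real.sqrt_nonneg _
  have hs0 : 0 ≤ s := by rw [hs]; exact Real.sqrt_nonneg _
  have key : c * nu = s * (1 + d) := by
    have h1 : 0 ≤ c * nu := mul_nonneg hc0 hnupos.le
    have h2 : 0 ≤ s * (1+d) := mul_nonneg hs0 (by linarith)
    have h3 : (c*nu)^2 = (s*(1+d))^2 := by rw [mul_pow, mul_pow, hc2, hs2, hnu2]; ring
    calc c * nu = Real.sqrt ((c*nu)^2) := (Real.sqrt_sq h1).symm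
      _ = Real.sqrt ((s*(1+d))^2) := by rw [h3]
      _ = s * (1+d) := Real.sqrt_sq h2
  have hnune : nu ≠ 0 := ne_of_gt hnupos
  have hngne : ng ≠ 0 := ne_of_gt hngpos
  have key1 : r₁ * bc = hc' * r₁ := by
    rw [hr₁, hbc, hhc]
    ext
    · erw [Quaternion.re_mul, Quaternion.re_mul]
      field_simp
      subst hu₁ hu₂ hu₃
      ring
    · erw [Quaternion.imI_mul, Quaternion.imI_mul]
      field_simp
      subst hu₁ hu₂ hu₃
      linear_combination (b₁-h₁)*key + s*h₁*hb - s*b₁*hh + s*(b₁-h₁)*hd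
    · erw [Quaternion.imJ_mul, Quaternion.imJ_mul]
      field_simp
      subst hu₁ hu₂ hu₃
      linear_combination (b₂-h₂)*key + s*h₂*hb - s*b₂*hh + s*(b₂-h₂)*hd
    · erw [Quaternion.imK_mul, Quaternion.imK_mul]
      field_simp
      subst hu₁ hu₂ hu₃
      linear_combination (b₃-h₃)*key + s*h₃*hb - s*b₃*hh + s*(b₃-h₃)*hd
  have key2 : r₂ * bc = hc' * r₂ := by
    rw [hr₂, hbc, hhc]
    ext
    · erw [Quaternion.re_mul, Quaternion.re_mul]
      field_simp
      linear_combination hh - hb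
    · erw [Quaternion.imI_mul, Quaternion.imI_mul]; field_simp; ring
    · erw [Quaternion.imJ_mul, Quaternion.imJ_mul]; field_simp; ring
    · erw [Quaternion.imK_mul, Quaternion.imK_mul]; field_simp; ring
  have hnsq : Quaternion.normSq q = 1 := by
    rw [hqdef, hr₁, hr₂, Quaternion.normSq_def']
    simp only [Quaternion.re_add, Quaternion.imI_add, Quaternion.imJ_add, Quaternion.imK_add,
      Quaternion.re_smul, Quaternion.imI_smul, Quaternion.imJ_smul, Quaternion.imK_smul,
      smul_eq_mul]
    erw [Quaternion.re_smul, Quaternion.re_smul, Quaternion.imI_smul, Quaternion.imI_smul,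
      Quaternion.imJ_smul, Quaternion.imJ_smul, Quaternion.imK_smul, Quaternion.imK_smul]
    simp only [smul_eq_mul]
    subst hu₁ hu₂ hu₃
    field_simp
    linear_combination (c'^2*s^2*ng^2)*husum - (c'^2*s^2*ng^2)*hnu2 + (s'^2*nu^2)*hgsum
      - (s'^2*nu^2)*hng2 + (c'^2*nu^2*ng^2)*hc2 + (c'^2*nu^2*ng^2)*hs2 + (nu^2*ng^2)*hcs
  constructor
  · have hmm : ‖q‖ * ‖q‖ = 1 := by rw [← Quaternion.normSq_eq_norm_mul_self, hnsq]
    rcases mul_self_eq_one_iff.mp hmm with h | h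
    · exact h
    · linarith [norm_nonneg q]
  · rw [hqdef, add_mul, mul_add, smul_mul_assoc, smul_mul_assoc, mul_smul_comm, mul_smul_comm,
      key1, key2]
end

section
/- With the notation of the two special solutions r₁ = (c, s·(b×h)/‖b×h‖) and r₂ = (0, (b+h)/‖b+h‖) for unit vectors b, h ∈ ℝ³ with b ≠ ±h (c = √((1+⟪b,h⟫)/2), s = √((1−⟪b,h⟫)/2)): r₁ and r₂ are orthogonal unit quaternions, i.e., ⟪r₁, r₂⟫ = 0 and ‖r₁‖ = ‖r₂‖ = 1, where the inner product is the Euclidean inner product on the four components. -/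
open Real

theorem stmt7 (h₁ h₂ h₃ b₁ b₂ b₃ : ℝ)
    (hh : h₁^2 + h₂^2 + h₃^2 = 1) (hb : b₁^2 + b₂^2 + b₃^2 = 1)
    (hne : ¬ (b₁ = h₁ ∧ b₂ = h₂ ∧ b₃ = h₃))
    (hne' : ¬ (b₁ = -h₁ ∧ b₂ = -h₂ ∧ b₃ = -h₃))
    (c s u₁ u₂ u₃ nu ng : ℝ)
    (hc : c = sqrt ((1 + (b₁*h₁ + b₂*h₂ + b₃*h₃))/2))
    (hs : s = sqrt ((1 - (b₁*h₁ + b₂*h₂ + b₃*h₃))/2))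
    (hu₁ : u₁ = b₂*h₃ - b₃*h₂) (hu₂ : u₂ = b₃*h₁ - b₁*h₃) (hu₃ : u₃ = b₁*h₂ - b₂*h₁)
    (hnu : nu = sqrt (u₁^2 + u₂^2 + u₃^2))
    (hng : ng = sqrt ((b₁+h₁)^2 + (b₂+h₂)^2 + (b₃+h₃)^2))
    (r₁ r₂ : Quaternion ℝ)
    (hr₁ : r₁ = ⟨c, s * u₁ / nu, s * u₂ / nu, s * u₃ / nu⟩)
    (hr₂ : r₂ = ⟨0, (b₁+h₁)/ng, (b₂+h₂)/ng, (b₃+h₃)/ng⟩) :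
    r₁.re * r₂.re + r₁.imI * r₂.imI + r₁.imJ * r₂.imJ + r₁.imK * r₂.imK = 0 ∧
      ‖r₁‖ = 1 ∧ ‖r₂‖ = 1 := by
  set d : ℝ := b₁*h₁ + b₂*h₂ + b₃*h₃ with hd
  clear_value d
  have key1 : (b₁-h₁)^2 + (b₂-h₂)^2 + (b₃-h₃)^2 = 2 - 2*d := by
    rw [hd]; linear_combination hb + hh
  have key2 : (b₁+h₁)^2 + (b₂+h₂)^2 + (b₃+h₃)^2 = 2 + 2*d := by
    rw [hd]; linear_combination hb + hh
  have hd1 : d < 1 := by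
    rcases lt_or_ge d 1 with h | h
    · exact h
    · exfalso
      apply hne
      have hle : (b₁-h₁)^2 + (b₂-h₂)^2 + (b₃-h₃)^2 ≤ 0 := by linarith
      have q1 := sq_nonneg (b₁-h₁); have q2 := sq_nonneg (b₂-h₂); have q3 := sq_nonneg (b₃-h₃)
      have e1 : b₁ - h₁ = 0 := by
        have : (b₁-h₁)^2 = 0 := le_antisymm (by linarith) q1
        exact pow_eq_zero_iff (by norm_num) |>.1 this
      have e2 : b₂ - h₂ = 0 := by
        have : (b₂-h₂)^2 = 0 := le_antisymm (by linarith) q2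
        exact pow_eq_zero_iff (by norm_num) |>.1 this
      have e3 : b₃ - h₃ = 0 := by
        have : (b₃-h₃)^2 = 0 := le_antisymm (by linarith) q3
        exact pow_eq_zero_iff (by norm_num) |>.1 this
      exact ⟨by linarith, by linarith, by linarith⟩
  have hd2 : -1 < d := by
    rcases lt_or_ge (-1) d with h | h
    · exact h
    · exfalso
      apply hne'
      have hle : (b₁+h₁)^2 + (b₂+h₂)^2 + (b₃+h₃)^2 ≤ 0 := by linarith
      have q1 := sq_nonneg (b₁+h₁); have q2 := sq_nonneg (b₂+h₂); have q3 := sq_nonneg (b₃+h₃)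
      have e1 : b₁ + h₁ = 0 := by
        have : (b₁+h₁)^2 = 0 := le_antisymm (by linarith) q1
        exact pow_eq_zero_iff (by norm_num) |>.1 this
      have e2 : b₂ + h₂ = 0 := by
        have : (b₂+h₂)^2 = 0 := le_antisymm (by linarith) q2
        exact pow_eq_zero_iff (by norm_num) |>.1 this
      have e3 : b₃ + h₃ = 0 := by
        have : (b₃+h₃)^2 = 0 := le_antisymm (by linarith) q3
        exact pow_eq_zero_iff (by norm_num) |>.1 this
      exact ⟨by linarith, by linarith, by linarith⟩
  have husum : u₁^2 + u₂^2 + u₃^2 = (1-d)*(1+d) := by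
    rw [hu₁, hu₂, hu₃, hd]
    linear_combination (h₁^2 + h₂^2 + h₃^2) * hb + hh
  have hnupos : 0 < nu := by
    rw [hnu, husum]
    exact Real.sqrt_pos.2 (by nlinarith)
  have hnusq : nu^2 = (1-d)*(1+d) := by
    rw [hnu]
    rw [Real.sq_sqrt (by positivity : (0:ℝ) ≤ u₁^2+u₂^2+u₃^2)]
    exact husum
  have hngpos : 0 < ng := by
    rw [hng, key2]
    exact Real.sqrt_pos.2 (by linarith)
  have hngsq : ng^2 = 2 + 2*d := by
    rw [hng, Real.sq_sqrt (by positivity)]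
    exact key2
  have hcsq : c^2 = (1+d)/2 := by
    rw [hc, Real.sq_sqrt (by linarith)]
  have hssq : s^2 = (1-d)/2 := by
    rw [hs, Real.sq_sqrt (by linarith)]
  have hnu0 : nu ≠ 0 := ne_of_gt hnupos
  have hng0 : ng ≠ 0 := ne_of_gt hngpos
  refine ⟨?_, ?_, ?_⟩
  · rw [hr₁, hr₂]
    show c * 0 + s * u₁ / nu * ((b₁+h₁)/ng) + s * u₂ / nu * ((b₂+h₂)/ng)
        + s * u₃ / nu * ((b₃+h₃)/ng) = 0
    have hz : u₁*(b₁+h₁) + u₂*(b₂+h₂) + u₃*(b₃+h₃) = 0 := by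
      rw [hu₁, hu₂, hu₃]; ring
    have : c * 0 + s * u₁ / nu * ((b₁+h₁)/ng) + s * u₂ / nu * ((b₂+h₂)/ng)
        + s * u₃ / nu * ((b₃+h₃)/ng)
        = s * (u₁*(b₁+h₁) + u₂*(b₂+h₂) + u₃*(b₃+h₃)) / (nu * ng) := by ring
    rw [this, hz, mul_zero, zero_div]
  · have h1 : ‖r₁‖ * ‖r₁‖ = 1 := by
      rw [← Quaternion.normSq_eq_norm_mul_self, Quaternion.normSq_def', hr₁]
      show c^2 + (s*u₁/nu)^2 + (s*u₂/nu)^2 + (s*u₃/nu)^2 = 1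
      have e : c^2 + (s*u₁/nu)^2 + (s*u₂/nu)^2 + (s*u₃/nu)^2
          = c^2 + s^2 * ((u₁^2+u₂^2+u₃^2) / nu^2) := by ring
      have hne1 : (1-d)*(1+d) ≠ 0 := ne_of_gt (mul_pos (by linarith) (by linarith))
      rw [e, husum, hnusq, div_self hne1, mul_one, hcsq, hssq]
      ring
    rcases mul_self_eq_one_iff.1 h1 with h | h
    · exact h
    · linarith [norm_nonneg r₁]
  · have h2 : ‖r₂‖ * ‖r₂‖ = 1 := by
      rw [← Quaternion.normSq_eq_norm_mul_self, Quaternion.normSq_def', hr₂]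
      show (0:ℝ)^2 + ((b₁+h₁)/ng)^2 + ((b₂+h₂)/ng)^2 + ((b₃+h₃)/ng)^2 = 1
      have e : (0:ℝ)^2 + ((b₁+h₁)/ng)^2 + ((b₂+h₂)/ng)^2 + ((b₃+h₃)/ng)^2
          = ((b₁+h₁)^2 + (b₂+h₂)^2 + (b₃+h₃)^2) / ng^2 := by ring
      have hne2 : (2:ℝ) + 2*d ≠ 0 := by linarith
      rw [e, key2, hngsq, div_self hne2]
    rcases mul_self_eq_one_iff.1 h2 with h | h
    · exact h
    · linarith [norm_nonneg r₂]
end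

section
/- Every element of the feasibility cone is obtained by rotating the first special solution about h: if h, b ∈ ℝ³ are unit vectors with b ≠ ±h, r₁ = (c, s·(b×h)/‖b×h‖) with c = √((1+⟪b,h⟫)/2), s = √((1−⟪b,h⟫)/2), and q is any unit quaternion satisfying q ⊗ b̌ = ȟ ⊗ q, then there exist reals c', s' with c'² + s'² = 1 such that q = (c', s'·h) ⊗ r₁. -/
open Real

set_option maxHeartbeats 2000000 in
theorem stmt8 (h₁ h₂ h₃ b₁ b₂ b₃ : ℝ)
    (hh : h₁^2 + h₂^2 + h₃^2 = 1) (hb : b₁^2 + b₂^2 + b₃^2 = 1)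
    (hne : ¬ (b₁ = h₁ ∧ b₂ = h₂ ∧ b₃ = h₃))
    (hne' : ¬ (b₁ = -h₁ ∧ b₂ = -h₂ ∧ b₃ = -h₃))
    (c s u₁ u₂ u₃ nu : ℝ)
    (hc : c = sqrt ((1 + (b₁*h₁ + b₂*h₂ + b₃*h₃))/2))
    (hs : s = sqrt ((1 - (b₁*h₁ + b₂*h₂ + b₃*h₃))/2))
    (hu₁ : u₁ = b₂*h₃ - b₃*h₂) (hu₂ : u₂ = b₃*h₁ - b₁*h₃) (hu₃ : u₃ = b₁*h₂ - b₂*h₁)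
    (hnu : nu = sqrt (u₁^2 + u₂^2 + u₃^2))
    (r₁ bc hc' : Quaternion ℝ)
    (hr₁ : r₁ = ⟨c, s * u₁ / nu, s * u₂ / nu, s * u₃ / nu⟩)
    (hbc : bc = ⟨0, b₁, b₂, b₃⟩) (hhc : hc' = ⟨0, h₁, h₂, h₃⟩)
    (q : Quaternion ℝ) (hq : ‖q‖ = 1)
    (hqc : q * bc = hc' * q) :
    ∃ c' s' : ℝ, c'^2 + s'^2 = 1 ∧
      ∃ rot : Quaternion ℝ, rot = ⟨c', s' * h₁, s' * h₂, s' * h₃⟩ ∧ q = rot * r₁ := by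
  have hd1 : b₁*h₁ + b₂*h₂ + b₃*h₃ < 1 := by
    rcases lt_or_ge (b₁*h₁ + b₂*h₂ + b₃*h₃) 1 with h | h
    · exact h
    · exfalso; apply hne
      have h0 : (b₁-h₁)^2 + (b₂-h₂)^2 + (b₃-h₃)^2 ≤ 0 := by nlinarith
      have e1 : (b₁-h₁)^2 = 0 := le_antisymm (by linarith [sq_nonneg (b₂-h₂), sq_nonneg (b₃-h₃)]) (sq_nonneg _)
      have e2 : (b₂-h₂)^2 = 0 := le_antisymm (by linarith [sq_nonneg (b₁-h₁), sq_nonneg (b₃-h₃)]) (sq_nonneg _)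
      have e3 : (b₃-h₃)^2 = 0 := le_antisymm (by linarith [sq_nonneg (b₁-h₁), sq_nonneg (b₂-h₂)]) (sq_nonneg _)
      have f1 := sub_eq_zero.mp (pow_eq_zero_iff (two_ne_zero) |>.mp e1)
      have f2 := sub_eq_zero.mp (pow_eq_zero_iff (two_ne_zero) |>.mp e2)
      have f3 := sub_eq_zero.mp (pow_eq_zero_iff (two_ne_zero) |>.mp e3)
      exact ⟨f1, f2, f3⟩
  have hd2 : -1 < b₁*h₁ + b₂*h₂ + b₃*h₃ := by
    rcases lt_or_ge (-1) (b₁*h₁ + b₂*h₂ + b₃*h₃) with h | h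
    · exact h
    · exfalso; apply hne'
      have h0 : (b₁+h₁)^2 + (b₂+h₂)^2 + (b₃+h₃)^2 ≤ 0 := by nlinarith
      have e1 : (b₁+h₁)^2 = 0 := le_antisymm (by linarith [sq_nonneg (b₂+h₂), sq_nonneg (b₃+h₃)]) (sq_nonneg _)
      have e2 : (b₂+h₂)^2 = 0 := le_antisymm (by linarith [sq_nonneg (b₁+h₁), sq_nonneg (b₃+h₃)]) (sq_nonneg _)
      have e3 : (b₃+h₃)^2 = 0 := le_antisymm (by linarith [sq_nonneg (b₁+h₁), sq_nonneg (b₂+h₂)]) (sq_nonneg _)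
      have f1 : b₁ = -h₁ := by have := pow_eq_zero_iff (two_ne_zero) |>.mp e1; linarith
      have f2 : b₂ = -h₂ := by have := pow_eq_zero_iff (two_ne_zero) |>.mp e2; linarith
      have f3 : b₃ = -h₃ := by have := pow_eq_zero_iff (two_ne_zero) |>.mp e3; linarith
      exact ⟨f1, f2, f3⟩
  have hc2 : c^2 = (1 + (b₁*h₁ + b₂*h₂ + b₃*h₃))/2 := by
    rw [hc]; exact Real.sq_sqrt (by linarith)
  have hs2 : s^2 = (1 - (b₁*h₁ + b₂*h₂ + b₃*h₃))/2 := by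
    rw [hs]; exact Real.sq_sqrt (by linarith)
  have hcpos : 0 < c := by rw [hc]; exact Real.sqrt_pos.mpr (by linarith)
  have hspos : 0 < s := by rw [hs]; exact Real.sqrt_pos.mpr (by linarith)
  have husq : u₁^2 + u₂^2 + u₃^2 = 1 - (b₁*h₁ + b₂*h₂ + b₃*h₃)^2 := by
    rw [hu₁, hu₂, hu₃]; linear_combination (b₁^2+b₂^2+b₃^2)*hh + hb
  have husqpos : 0 < u₁^2 + u₂^2 + u₃^2 := by
    rw [husq]; nlinarith [mul_pos (by linarith : (0:ℝ) < 1 - (b₁*h₁ + b₂*h₂ + b₃*h₃)) (by linarith : (0:ℝ) < 1 + (b₁*h₁ + b₂*h₂ + b₃*h₃))]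
  have hnupos : 0 < nu := by rw [hnu]; exact Real.sqrt_pos.mpr husqpos
  have hnu2 : nu^2 = 1 - (b₁*h₁ + b₂*h₂ + b₃*h₃)^2 := by
    rw [hnu, Real.sq_sqrt husqpos.le]; exact husq
  have hcs : 2*c*s = nu := by
    have e : (2*c*s)^2 = nu^2 := by
      rw [hnu2]; linear_combination (4*s^2)*hc2 + (2*(1 + (b₁*h₁ + b₂*h₂ + b₃*h₃)))*hs2
    calc 2*c*s = sqrt ((2*c*s)^2) := (Real.sqrt_sq (by positivity)).symm
      _ = sqrt (nu^2) := by rw [e]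
      _ = nu := Real.sqrt_sq hnupos.le
  have hcs1 : c^2 + s^2 = 1 := by rw [hc2, hs2]; ring
  have hrel : c * nu = s * (1 + (b₁*h₁ + b₂*h₂ + b₃*h₃)) := by
    rw [← hcs]; linear_combination 2*s*hc2
  have hnune : nu ≠ 0 := ne_of_gt hnupos
  have hkey : hc' * r₁ = r₁ * bc := by
    rw [Quaternion.ext_iff, Quaternion.re_mul, Quaternion.re_mul, Quaternion.imI_mul, Quaternion.imI_mul,
      Quaternion.imJ_mul, Quaternion.imJ_mul, Quaternion.imK_mul, Quaternion.imK_mul, hr₁, hbc, hhc]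
    refine ⟨?_, ?_, ?_, ?_⟩ <;> simp only [] <;> rw [hu₁, hu₂, hu₃] <;> field_simp
    · ring
    · linear_combination (h₁-b₁)*hrel + s*b₁*hh - s*h₁*hb
    · linear_combination (h₂-b₂)*hrel + s*b₂*hh - s*h₂*hb
    · linear_combination (h₃-b₃)*hrel + s*b₃*hh - s*h₃*hb
  have husq2 : u₁^2 + u₂^2 + u₃^2 = nu^2 := by rw [hnu2]; exact husq
  have hnr1 : Quaternion.normSq r₁ = 1 := by
    rw [Quaternion.normSq_def', hr₁]
    simp only []
    field_simp
    linear_combination s^2*husq2 + nu^2*hcs1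
  have hstar : star r₁ * r₁ = 1 := by
    rw [Quaternion.star_mul_self, hnr1]; norm_num
  have hqn : Quaternion.normSq q = 1 := by
    rw [Quaternion.normSq_eq_norm_mul_self, hq]; norm_num
  set p := q * star r₁ with hp
  have hpr : p * r₁ = q := by rw [hp, mul_assoc, hstar, mul_one]
  have hpn : Quaternion.normSq p = 1 := by
    rw [hp, map_mul, Quaternion.normSq_star, hnr1, hqn]; norm_num
  have e1 : star hc' = -hc' := by
    rw [Quaternion.ext_iff]; simp only [Quaternion.re_star, Quaternion.imI_star, Quaternion.imJ_star, Quaternion.imK_star, Quaternion.re_neg, Quaternion.imI_neg, Quaternion.imJ_neg, Quaternion.imK_neg]; rw [hhc]; norm_num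
  have e2 : star bc = -bc := by
    rw [Quaternion.ext_iff]; simp only [Quaternion.re_star, Quaternion.imI_star, Quaternion.imJ_star, Quaternion.imK_star, Quaternion.re_neg, Quaternion.imI_neg, Quaternion.imJ_neg, Quaternion.imK_neg]; rw [hbc]; norm_num
  have h1 : star r₁ * hc' = bc * star r₁ := by
    have h2 := congrArg star hkey
    rw [star_mul, star_mul, e1, e2, mul_neg, neg_mul] at h2
    exact neg_inj.mp h2
  have hcomm : p * hc' = hc' * p := by
    calc p * hc' = q * (star r₁ * hc') := by rw [hp, mul_assoc]
      _ = (q * bc) * star r₁ := by rw [h1, ← mul_assoc]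
      _ = (hc' * q) * star r₁ := by rw [hqc]
      _ = hc' * p := by rw [hp, mul_assoc]
  have hI := congrArg QuaternionAlgebra.imI hcomm
  have hJ := congrArg QuaternionAlgebra.imJ hcomm
  have hK := congrArg QuaternionAlgebra.imK hcomm
  simp only [Quaternion.imI_mul, Quaternion.imJ_mul, Quaternion.imK_mul] at hI hJ hK
  rw [hhc] at hI hJ hK
  dsimp only at hI hJ hK
  have cJK : p.imJ*h₃ - p.imK*h₂ = 0 := by linarith
  have cKI : p.imK*h₁ - p.imI*h₃ = 0 := by linarith
  have cIJ : p.imI*h₂ - p.imJ*h₁ = 0 := by linarith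
  set s' := p.imI*h₁ + p.imJ*h₂ + p.imK*h₃ with hs'
  have hp1 : p.imI = s'*h₁ := by rw [hs']; linear_combination (-p.imI)*hh + h₂*cIJ - h₃*cKI
  have hp2 : p.imJ = s'*h₂ := by rw [hs']; linear_combination (-p.imJ)*hh - h₁*cIJ + h₃*cJK
  have hp3 : p.imK = s'*h₃ := by rw [hs']; linear_combination (-p.imK)*hh + h₁*cKI - h₂*cJK
  have hpd : p.re^2 + p.imI^2 + p.imJ^2 + p.imK^2 = 1 := by
    rw [← Quaternion.normSq_def', hpn]
  refine ⟨p.re, s', ?_, p, ?_, hpr.symm⟩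
  · linear_combination hpd - (p.imI + s'*h₁)*hp1 - (p.imJ + s'*h₂)*hp2 - (p.imK + s'*h₃)*hp3 - s'^2*hh
  · apply Quaternion.ext_iff.mpr
    exact ⟨rfl, hp1, hp2, hp3⟩
end

section
/- Any two unit quaternions p ≠ ±q determine a feasibility cone containing them: there exists a unit vector n ∈ ℝ³ and a unit vector b ∈ ℝ³ such that both p and q satisfy x ⊗ b̌ = ň ⊗ x, where one may take n as the normalized vector part of q ⊗ p⁻¹ and b = p⁻¹ ⊗ ň ⊗ p. -/
open Real

theorem stmt9 (p q : Quaternion ℝ) (hp : ‖p‖ = 1) (hq : ‖q‖ = 1)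
    (hpq : p ≠ q) (hpq' : p ≠ -q)
    (w : Quaternion ℝ) (hw : w = q * star p)
    (nm n₁ n₂ n₃ : ℝ)
    (hnm : nm = sqrt (w.imI^2 + w.imJ^2 + w.imK^2))
    (hn₁ : n₁ = w.imI / nm) (hn₂ : n₂ = w.imJ / nm) (hn₃ : n₃ = w.imK / nm)
    (nq bq : Quaternion ℝ)
    (hnq : nq = ⟨0, n₁, n₂, n₃⟩)
    (hbq : bq = star p * nq * p) :
    n₁^2 + n₂^2 + n₃^2 = 1 ∧
    bq.re = 0 ∧
    bq.imI^2 + bq.imJ^2 + bq.imK^2 = 1 ∧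
    p * bq = nq * p ∧
    q * bq = nq * q := by
  have hnsp : Quaternion.normSq p = 1 := by
    rw [Quaternion.normSq_eq_norm_mul_self, hp]; norm_num
  have hps : star p * p = 1 := by
    rw [Quaternion.star_mul_self, hnsp]; norm_num
  have hsp : p * star p = 1 := by
    rw [Quaternion.self_mul_star, hnsp]; norm_num
  have hwn : Quaternion.normSq w = 1 := by
    rw [hw, map_mul, Quaternion.normSq_star,
      Quaternion.normSq_eq_norm_mul_self, Quaternion.normSq_eq_norm_mul_self, hp, hq]
    norm_num
  have hwn' : w.re^2 + w.imI^2 + w.imJ^2 + w.imK^2 = 1 := by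
    rw [← Quaternion.normSq_def', hwn]
  have hnm0 : nm ≠ 0 := by
    intro h
    rw [h, eq_comm, Real.sqrt_eq_zero'] at hnm
    have h1 : w.imI = 0 := by nlinarith [sq_nonneg w.imI, sq_nonneg w.imJ, sq_nonneg w.imK]
    have h2 : w.imJ = 0 := by nlinarith [sq_nonneg w.imI, sq_nonneg w.imJ, sq_nonneg w.imK]
    have h3 : w.imK = 0 := by nlinarith [sq_nonneg w.imI, sq_nonneg w.imJ, sq_nonneg w.imK]
    have hre : w.re = 1 ∨ w.re = -1 := by
      have h4 : w.re * w.re = 1 := by nlinarith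
      exact mul_self_eq_one_iff.mp h4
    have hqwp : q = w * p := by rw [hw, mul_assoc, hps, mul_one]
    rcases hre with h | h
    · apply hpq
      have : w = 1 := by ext <;> simp [h, h1, h2, h3, Quaternion.re_one, Quaternion.imI_one, Quaternion.imJ_one, Quaternion.imK_one]
      rw [hqwp, this, one_mul]
    · apply hpq'
      have : w = -1 := by ext <;> simp [h, h1, h2, h3, Quaternion.re_one, Quaternion.imI_one, Quaternion.imJ_one, Quaternion.imK_one]
      rw [hqwp, this]; simp
  have hnm2 : nm^2 = w.imI^2 + w.imJ^2 + w.imK^2 := by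
    rw [hnm]; exact Real.sq_sqrt (by positivity)
  have g1 : n₁^2 + n₂^2 + n₃^2 = 1 := by
    rw [hn₁, hn₂, hn₃]; field_simp; linarith [hnm2]
  have hwI : w.imI = nm * n₁ := by rw [hn₁]; field_simp
  have hwJ : w.imJ = nm * n₂ := by rw [hn₂]; field_simp
  have hwK : w.imK = nm * n₃ := by rw [hn₃]; field_simp
  have hcomm : nq * w = w * nq := by
    ext <;> simp [show nq.re = 0 by rw [hnq], show nq.imI = n₁ by rw [hnq], show nq.imJ = n₂ by rw [hnq], show nq.imK = n₃ by rw [hnq], Quaternion.re_mul, Quaternion.imI_mul, Quaternion.imJ_mul,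
      Quaternion.imK_mul, hwI, hwJ, hwK] <;> ring
  have g2 : bq.re = 0 := by
    simp [hbq, show nq.re = 0 by rw [hnq], show nq.imI = n₁ by rw [hnq], show nq.imJ = n₂ by rw [hnq], show nq.imK = n₃ by rw [hnq], Quaternion.re_mul, Quaternion.imI_mul, Quaternion.imJ_mul,
      Quaternion.imK_mul, Quaternion.re_star, Quaternion.imI_star, Quaternion.imJ_star,
      Quaternion.imK_star]
    ring
  have g3 : bq.imI^2 + bq.imJ^2 + bq.imK^2 = 1 := by
    have hnsb : Quaternion.normSq bq = 1 := by
      rw [hbq, map_mul, map_mul, Quaternion.normSq_star, hnsp]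
      have : Quaternion.normSq nq = 1 := by
        rw [Quaternion.normSq_def', hnq]; simp; linarith [g1]
      rw [this]; ring
    have := Quaternion.normSq_def' bq
    rw [hnsb, g2] at this
    linarith
  have g4 : p * bq = nq * p := by
    rw [hbq, ← mul_assoc, ← mul_assoc, hsp, one_mul]
  have g5 : q * bq = nq * q := by
    have hqwp : q = w * p := by rw [hw, mul_assoc, hps, mul_one]
    calc q * bq = (q * star p) * nq * p := by rw [hbq]; simp only [mul_assoc]
    _ = w * nq * p := by rw [← hw]
    _ = (nq * w) * p := by rw [hcomm]
    _ = nq * q := by rw [mul_assoc, ← hqwp]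
  exact ⟨g1, g2, g3, g4, g5⟩
end

section
/- For the two-vector cost function J(Φ₁, Φ₂) = ‖r₁(Φ₁) ⊗ q − r₂(Φ₂) ⊗ p‖², where r₁(Φ₁) = (cos(Φ₁/2), sin(Φ₁/2)·h) and r₂(Φ₂) = (cos(Φ₂/2), sin(Φ₂/2)·k), and p, q are unit quaternions with h, k unit vectors in ℝ³: J(Φ₁, Φ₂) = 2 + 2l₁c₁c₂ + 2l₂s₁s₂ + 2l₃c₁s₂ + 2l₄s₁c₂, where cᵢ = cos(Φᵢ/2), sᵢ = sin(Φᵢ/2), l₁ = −q₀p₀ − ⟪q,p⟫, l₂ = ⟪−q₀p + p₀q − q×p, h×k⟫ − (q₀p₀ + ⟪q,p⟫)⟪h,k⟫, l₃ = ⟪k, q₀p − p₀q + q×p⟫, and l₄ = ⟪h, p₀q − q₀p + p×q⟫. -/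
open Real

theorem stmt10 (h₁ h₂ h₃ k₁ k₂ k₃ q₀ q₁ q₂ q₃ p₀ p₁ p₂ p₃ : ℝ)
    (hh : h₁^2 + h₂^2 + h₃^2 = 1) (hk : k₁^2 + k₂^2 + k₃^2 = 1)
    (Q P : Quaternion ℝ)
    (hQ : Q = ⟨q₀, q₁, q₂, q₃⟩) (hP : P = ⟨p₀, p₁, p₂, p₃⟩)
    (hQn : ‖Q‖ = 1) (hPn : ‖P‖ = 1)
    (l₁ l₂ l₃ l₄ : ℝ)
    (hl₁ : l₁ = -(q₀*p₀) - (q₁*p₁ + q₂*p₂ + q₃*p₃))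
    (hl₂ : l₂ =
      ((-(q₀*p₁) + p₀*q₁ - (q₂*p₃ - q₃*p₂)) * (h₂*k₃ - h₃*k₂) +
       (-(q₀*p₂) + p₀*q₂ - (q₃*p₁ - q₁*p₃)) * (h₃*k₁ - h₁*k₃) +
       (-(q₀*p₃) + p₀*q₃ - (q₁*p₂ - q₂*p₁)) * (h₁*k₂ - h₂*k₁))
      - (q₀*p₀ + (q₁*p₁ + q₂*p₂ + q₃*p₃)) * (h₁*k₁ + h₂*k₂ + h₃*k₃))
    (hl₃ : l₃ =
      k₁ * (q₀*p₁ - p₀*q₁ + (q₂*p₃ - q₃*p₂)) +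
      k₂ * (q₀*p₂ - p₀*q₂ + (q₃*p₁ - q₁*p₃)) +
      k₃ * (q₀*p₃ - p₀*q₃ + (q₁*p₂ - q₂*p₁)))
    (hl₄ : l₄ =
      h₁ * (p₀*q₁ - q₀*p₁ + (p₂*q₃ - p₃*q₂)) +
      h₂ * (p₀*q₂ - q₀*p₂ + (p₃*q₁ - p₁*q₃)) +
      h₃ * (p₀*q₃ - q₀*p₃ + (p₁*q₂ - p₂*q₁)))
    (r₁ r₂ : ℝ → Quaternion ℝ)
    (hr₁ : ∀ Φ, r₁ Φ = ⟨cos (Φ/2), sin (Φ/2) * h₁, sin (Φ/2) * h₂, sin (Φ/2) * h₃⟩)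
    (hr₂ : ∀ Φ, r₂ Φ = ⟨cos (Φ/2), sin (Φ/2) * k₁, sin (Φ/2) * k₂, sin (Φ/2) * k₃⟩) :
    ∀ Φ₁ Φ₂ : ℝ,
      ‖r₁ Φ₁ * Q - r₂ Φ₂ * P‖^2
      = 2 + 2*l₁*cos (Φ₁/2)*cos (Φ₂/2) + 2*l₂*sin (Φ₁/2)*sin (Φ₂/2)
          + 2*l₃*cos (Φ₁/2)*sin (Φ₂/2) + 2*l₄*sin (Φ₁/2)*cos (Φ₂/2) := by
  intro Φ₁ Φ₂
  have hQn2 : q₀^2 + q₁^2 + q₂^2 + q₃^2 = 1 := by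
    have := Quaternion.normSq_eq_norm_mul_self Q
    rw [hQn, Quaternion.normSq_def', hQ] at this
    simpa using this
  have hPn2 : p₀^2 + p₁^2 + p₂^2 + p₃^2 = 1 := by
    have := Quaternion.normSq_eq_norm_mul_self P
    rw [hPn, Quaternion.normSq_def', hP] at this
    simpa using this
  have hc1 := sin_sq_add_cos_sq (Φ₁/2)
  have hc2 := sin_sq_add_cos_sq (Φ₂/2)
  have key : ‖r₁ Φ₁ * Q - r₂ Φ₂ * P‖^2 = Quaternion.normSq (r₁ Φ₁ * Q - r₂ Φ₂ * P) := by
    rw [Quaternion.normSq_eq_norm_mul_self]; ring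
  rw [key]
  simp only [Quaternion.normSq_def', Quaternion.re_sub, Quaternion.imI_sub, Quaternion.imJ_sub,
    Quaternion.imK_sub, Quaternion.re_mul, Quaternion.imI_mul, Quaternion.imJ_mul,
    Quaternion.imK_mul]
  rw [hr₁, hr₂, hQ, hP, hl₁, hl₂, hl₃, hl₄]
  dsimp only
  linear_combination
    (cos (Φ₁/2)^2 + sin (Φ₁/2)^2*(h₁^2+h₂^2+h₃^2)) * hQn2
    + (cos (Φ₂/2)^2 + sin (Φ₂/2)^2*(k₁^2+k₂^2+k₃^2)) * hPn2
    + sin (Φ₁/2)^2 * hh + sin (Φ₂/2)^2 * hk + hc1 + hc2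
end

section
/- If h, b ∈ ℝ³ are unit vectors, p is a unit quaternion, and q = (p − ȟ ⊗ p ⊗ b̌)/‖p − ȟ ⊗ p ⊗ b̌‖ (assuming p − ȟ ⊗ p ⊗ b̌ ≠ 0), then q is a unit quaternion satisfying the measurement constraint q ⊗ b̌ = ȟ ⊗ q. -/
theorem stmt13 (h₁ h₂ h₃ b₁ b₂ b₃ : ℝ)
    (hh : h₁^2 + h₂^2 + h₃^2 = 1) (hb : b₁^2 + b₂^2 + b₃^2 = 1)
    (bc hc' : Quaternion ℝ)
    (hbc : bc = ⟨0, b₁, b₂, b₃⟩) (hhc : hc' = ⟨0, h₁, h₂, h₃⟩)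
    (p : Quaternion ℝ) (hp : ‖p‖ = 1)
    (d : Quaternion ℝ) (hd : d = p - hc' * p * bc) (hdne : d ≠ 0)
    (q : Quaternion ℝ) (hqdef : q = ‖d‖⁻¹ • d) :
    ‖q‖ = 1 ∧ q * bc = hc' * q := by
  have hb2 : bc * bc = -1 := by
    ext <;> simp [Quaternion.re_mul, Quaternion.imI_mul, Quaternion.imJ_mul,
      Quaternion.imK_mul, Quaternion.re_one, Quaternion.imI_one, Quaternion.imJ_one,
      Quaternion.imK_one] <;> subst hbc <;> simp <;> nlinarith [hb]
  have hh2 : hc' * hc' = -1 := by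
    ext <;> simp [Quaternion.re_mul, Quaternion.imI_mul, Quaternion.imJ_mul,
      Quaternion.imK_mul, Quaternion.re_one, Quaternion.imI_one, Quaternion.imJ_one,
      Quaternion.imK_one] <;> subst hhc <;> simp <;> nlinarith [hh]
  have hdb : d * bc = hc' * d := by
    subst hd
    calc (p - hc' * p * bc) * bc = p * bc - hc' * p * (bc * bc) := by noncomm_ring
    _ = p * bc + hc' * p := by rw [hb2]; noncomm_ring
    _ = hc' * p - (hc' * hc') * p * bc := by rw [hh2]; noncomm_ring
    _ = hc' * (p - hc' * p * bc) := by noncomm_ring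
  have hdn : ‖d‖ ≠ 0 := norm_ne_zero_iff.mpr hdne
  constructor
  · rw [hqdef, norm_smul, norm_inv, norm_norm, inv_mul_cancel₀ hdn]
  · rw [hqdef, smul_mul_assoc, mul_smul_comm, hdb]
end

section
/- Let h, b ∈ ℝ³ be unit vectors and p a unit quaternion with p − ȟ ⊗ p ⊗ b̌ ≠ 0, and set q = (p − ȟ ⊗ p ⊗ b̌)/‖p − ȟ ⊗ p ⊗ b̌‖. Then the correction quaternion r = q ⊗ p⁻¹ has vector part orthogonal to h: ⟪h, Im(q ⊗ p⁻¹)⟫ = 0. -/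
theorem stmt14 (h₁ h₂ h₃ b₁ b₂ b₃ : ℝ)
    (hh : h₁^2 + h₂^2 + h₃^2 = 1) (hb : b₁^2 + b₂^2 + b₃^2 = 1)
    (bc hc' : Quaternion ℝ)
    (hbc : bc = ⟨0, b₁, b₂, b₃⟩) (hhc : hc' = ⟨0, h₁, h₂, h₃⟩)
    (p : Quaternion ℝ) (hp : ‖p‖ = 1)
    (d : Quaternion ℝ) (hd : d = p - hc' * p * bc) (hdne : d ≠ 0)
    (q : Quaternion ℝ) (hqdef : q = ‖d‖⁻¹ • d) :
    h₁ * (q * star p).imI + h₂ * (q * star p).imJ + h₃ * (q * star p).imK = 0 := by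
  subst hqdef hd
  simp only [Quaternion.re_smul, Quaternion.imI_smul, Quaternion.imJ_smul,
    Quaternion.imK_smul, Quaternion.imI_mul, Quaternion.imJ_mul, Quaternion.imK_mul,
    Quaternion.re_sub, Quaternion.imI_sub, Quaternion.imJ_sub, Quaternion.imK_sub,
    Quaternion.re_mul, Quaternion.re_star, Quaternion.imI_star, Quaternion.imJ_star,
    Quaternion.imK_star, smul_eq_mul,
    QuaternionAlgebra.re_mul, QuaternionAlgebra.imI_mul, QuaternionAlgebra.imJ_mul,
    QuaternionAlgebra.imK_mul]
  subst hbc hhc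
  dsimp only
  ring
end

section
/- Let h, b ∈ ℝ³ be unit vectors with b ≠ ±h, and define the special solutions r₁ = (c, s·(b×h)/‖b×h‖), r₂ = (0, (b+h)/‖b+h‖), with c = √((1+⟪b,h⟫)/2), s = √((1−⟪b,h⟫)/2). Viewing quaternions as vectors in ℝ⁴, the matrix identity 2(r₁r₁ᵀ + r₂r₂ᵀ) = I₄ − [ȟ⊗][⊗b̌] holds, where [ȟ⊗] is the 4×4 matrix of left multiplication by ȟ and [⊗b̌] is the 4×4 matrix of right multiplication by b̌. Equivalently, for every quaternion p: 2(⟪r₁,p⟫ r₁ + ⟪r₂,p⟫ r₂) = p − ȟ ⊗ p ⊗ b̌. -/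
open Real

private lemma sq_eq_nonneg {x y : ℝ} (hx : 0 ≤ x) (hy : 0 ≤ y) (h : x^2 = y^2) : x = y := by
  have h2 : (x - y) * (x + y) = 0 := by linear_combination h
  rcases mul_eq_zero.1 h2 with h3 | h3
  · linarith
  · nlinarith

set_option maxHeartbeats 4000000 in
theorem stmt15 (h₁ h₂ h₃ b₁ b₂ b₃ : ℝ)
    (hh : h₁^2 + h₂^2 + h₃^2 = 1) (hb : b₁^2 + b₂^2 + b₃^2 = 1)
    (hne : ¬ (b₁ = h₁ ∧ b₂ = h₂ ∧ b₃ = h₃))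
    (hne' : ¬ (b₁ = -h₁ ∧ b₂ = -h₂ ∧ b₃ = -h₃))
    (c s u₁ u₂ u₃ nu ng : ℝ)
    (hc : c = sqrt ((1 + (b₁*h₁ + b₂*h₂ + b₃*h₃))/2))
    (hs : s = sqrt ((1 - (b₁*h₁ + b₂*h₂ + b₃*h₃))/2))
    (hu₁ : u₁ = b₂*h₃ - b₃*h₂) (hu₂ : u₂ = b₃*h₁ - b₁*h₃) (hu₃ : u₃ = b₁*h₂ - b₂*h₁)
    (hnu : nu = sqrt (u₁^2 + u₂^2 + u₃^2))
    (hng : ng = sqrt ((b₁+h₁)^2 + (b₂+h₂)^2 + (b₃+h₃)^2))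
    (r₁ r₂ bc hc' : Quaternion ℝ)
    (hr₁ : r₁ = ⟨c, s * u₁ / nu, s * u₂ / nu, s * u₃ / nu⟩)
    (hr₂ : r₂ = ⟨0, (b₁+h₁)/ng, (b₂+h₂)/ng, (b₃+h₃)/ng⟩)
    (hbc : bc = ⟨0, b₁, b₂, b₃⟩) (hhc : hc' = ⟨0, h₁, h₂, h₃⟩) :
    ∀ p : Quaternion ℝ,
      (2 : ℝ) • ((r₁.re * p.re + r₁.imI * p.imI + r₁.imJ * p.imJ + r₁.imK * p.imK) • r₁ +
                 (r₂.re * p.re + r₂.imI * p.imI + r₂.imJ * p.imJ + r₂.imK * p.imK) • r₂)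
        = p - hc' * p * bc := by
  obtain ⟨D, hD⟩ : ∃ D : ℝ, D = b₁*h₁ + b₂*h₂ + b₃*h₃ := ⟨_, rfl⟩
  rw [← hD] at hc hs
  have hDle : D ≤ 1 := by rw [hD]; nlinarith [sq_nonneg (b₁-h₁), sq_nonneg (b₂-h₂), sq_nonneg (b₃-h₃)]
  have hDge : -1 ≤ D := by rw [hD]; nlinarith [sq_nonneg (b₁+h₁), sq_nonneg (b₂+h₂), sq_nonneg (b₃+h₃)]
  have hDlt : D < 1 := by
    rcases lt_or_eq_of_le hDle with h | h
    · exact h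
    · exfalso; apply hne
      rw [hD] at h
      have e1 : (b₁-h₁)^2 = 0 := by nlinarith [sq_nonneg (b₂-h₂), sq_nonneg (b₃-h₃)]
      have e2 : (b₂-h₂)^2 = 0 := by nlinarith [sq_nonneg (b₁-h₁), sq_nonneg (b₃-h₃)]
      have e3 : (b₃-h₃)^2 = 0 := by nlinarith [sq_nonneg (b₁-h₁), sq_nonneg (b₂-h₂)]
      refine ⟨?_, ?_, ?_⟩ <;> [skip; skip; skip] <;>
        first
        | exact sub_eq_zero.1 (pow_eq_zero_iff two_ne_zero |>.1 e1)
        | exact sub_eq_zero.1 (pow_eq_zero_iff two_ne_zero |>.1 e2)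
        | exact sub_eq_zero.1 (pow_eq_zero_iff two_ne_zero |>.1 e3)
  have hDgt : -1 < D := by
    rcases lt_or_eq_of_le hDge with h | h
    · exact h
    · exfalso; apply hne'
      rw [hD] at h
      have e1 : (b₁+h₁)^2 = 0 := by nlinarith [sq_nonneg (b₂+h₂), sq_nonneg (b₃+h₃)]
      have e2 : (b₂+h₂)^2 = 0 := by nlinarith [sq_nonneg (b₁+h₁), sq_nonneg (b₃+h₃)]
      have e3 : (b₃+h₃)^2 = 0 := by nlinarith [sq_nonneg (b₁+h₁), sq_nonneg (b₂+h₂)]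
      refine ⟨?_, ?_, ?_⟩
      · have := pow_eq_zero_iff (n:=2) two_ne_zero |>.1 e1; linarith
      · have := pow_eq_zero_iff (n:=2) two_ne_zero |>.1 e2; linarith
      · have := pow_eq_zero_iff (n:=2) two_ne_zero |>.1 e3; linarith
  have hc0 : 0 < c := by rw [hc]; exact Real.sqrt_pos.2 (by linarith)
  have hs0 : 0 < s := by rw [hs]; exact Real.sqrt_pos.2 (by linarith)
  have hcc : c^2 = (1+D)/2 := by rw [hc]; exact Real.sq_sqrt (by linarith)
  have hss : s^2 = (1-D)/2 := by rw [hs]; exact Real.sq_sqrt (by linarith)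
  have husq : u₁^2 + u₂^2 + u₃^2 = 1 - D^2 := by
    subst hu₁ hu₂ hu₃
    rw [hD]; linear_combination (h₁^2+h₂^2+h₃^2) * hb + hh
  have hnusq : nu^2 = 1 - D^2 := by
    rw [hnu, Real.sq_sqrt (by nlinarith [sq_nonneg u₁, sq_nonneg u₂, sq_nonneg u₃] : (0:ℝ) ≤ u₁^2+u₂^2+u₃^2)]
    exact husq
  have hnu0 : 0 ≤ nu := hnu ▸ Real.sqrt_nonneg _
  have hnuv : nu = 2*(c*s) := by
    apply sq_eq_nonneg hnu0 (by positivity)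
    rw [hnusq]; nlinarith [hcc, hss]
  have hngsq : ng^2 = 2 + 2*D := by
    rw [hng, Real.sq_sqrt (by positivity), hD]; linear_combination hb + hh
  have hng0 : 0 ≤ ng := hng ▸ Real.sqrt_nonneg _
  have hngv : ng = 2*c := by
    apply sq_eq_nonneg hng0 (by positivity)
    rw [hngsq]; nlinarith [hcc]
  have c0 : c ≠ 0 := ne_of_gt hc0
  have s0 : s ≠ 0 := ne_of_gt hs0
  have key : ∀ x : ℝ, s * x / nu = x / (2*c) := by
    intro x; rw [hnuv]; field_simp
  rw [hu₁, hu₂, hu₃, key, key, key] at hr₁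
  rw [hngv] at hr₂
  rw [hD] at hcc
  intro p
  rw [Quaternion.ext_iff]
  simp only [Quaternion.re_smul, Quaternion.imI_smul, Quaternion.imJ_smul, Quaternion.imK_smul,
    Quaternion.re_add, Quaternion.imI_add, Quaternion.imJ_add, Quaternion.imK_add,
    Quaternion.re_sub, Quaternion.imI_sub, Quaternion.imJ_sub, Quaternion.imK_sub,
    Quaternion.re_mul, Quaternion.imI_mul, Quaternion.imJ_mul, Quaternion.imK_mul,
    smul_eq_mul]
  subst hr₁ hr₂ hbc hhc
  obtain ⟨p₀, p₁, p₂, p₃⟩ := p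
  dsimp only
  refine ⟨?_, ?_, ?_, ?_⟩
  · linear_combination (norm := (field_simp; ring)) ((8*c^2*p₀)/(4*c^2)) * hcc
  · linear_combination (norm := (field_simp; ring))
      ((-4*p₁ + 4*b₃*h₃*p₁ - 4*b₃*h₁*p₃ + 4*b₂*h₂*p₁ - 4*b₂*h₁*p₂ - 4*b₁*h₃*p₃ - 4*b₁*h₂*p₂ - 4*b₁*h₁*p₁)/(4*c^2)) * hcc +
      ((2*p₁ - 2*h₁*h₃*p₃ - 2*h₁*h₂*p₂ - 2*h₁^2*p₁)/(4*c^2)) * hb +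
      ((2*b₃^2*p₁ + 2*b₂^2*p₁ - 2*b₁*b₃*p₃ - 2*b₁*b₂*p₂)/(4*c^2)) * hh
  · linear_combination (norm := (field_simp; ring))
      ((-4*p₂ + 4*b₃*h₃*p₂ - 4*b₃*h₂*p₃ - 4*b₂*h₃*p₃ - 4*b₂*h₂*p₂ - 4*b₂*h₁*p₁ - 4*b₁*h₂*p₁ + 4*b₁*h₁*p₂)/(4*c^2)) * hcc +
      ((2*h₃^2*p₂ - 2*h₂*h₃*p₃ - 2*h₁*h₂*p₁ + 2*h₁^2*p₂)/(4*c^2)) * hb +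
      ((2*p₂ - 2*b₂*b₃*p₃ - 2*b₂^2*p₂ - 2*b₁*b₂*p₁)/(4*c^2)) * hh
  · linear_combination (norm := (field_simp; ring))
      ((-4*p₃ - 4*b₃*h₃*p₃ - 4*b₃*h₂*p₂ - 4*b₃*h₁*p₁ - 4*b₂*h₃*p₂ + 4*b₂*h₂*p₃ - 4*b₁*h₃*p₁ + 4*b₁*h₁*p₃)/(4*c^2)) * hcc +
      ((-2*h₂*h₃*p₂ + 2*h₂^2*p₃ - 2*h₁*h₃*p₁ + 2*h₁^2*p₃)/(4*c^2)) * hb +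
      ((2*p₃ - 2*b₃^2*p₃ - 2*b₂*b₃*p₂ - 2*b₁*b₃*p₁)/(4*c^2)) * hh
end

section
/- Let h, b ∈ ℝ³ be unit vectors with b ≠ −h, and let p be a unit quaternion. Define h_p = p ⊗ b̌ ⊗ p⁻¹ (a pure quaternion with unit vector part) and suppose ⟪Im(h_p), h⟫ ≠ −1. Then the quaternion r = (1 + ⟪Im(h_p), h⟫, Im(h_p) × h)/√(2(1 + ⟪Im(h_p), h⟫)) is a unit quaternion satisfying r ⊗ h_p = ȟ ⊗ r, and moreover √(2(1 + ⟪Im(h_p), h⟫))·r = 1 − ȟ ⊗ p ⊗ b̌ ⊗ p⁻¹. -/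
open Real

theorem stmt16 (h₁ h₂ h₃ b₁ b₂ b₃ : ℝ)
    (hh : h₁^2 + h₂^2 + h₃^2 = 1) (hb : b₁^2 + b₂^2 + b₃^2 = 1)
    (hne' : ¬ (b₁ = -h₁ ∧ b₂ = -h₂ ∧ b₃ = -h₃))
    (bc hc' : Quaternion ℝ)
    (hbc : bc = ⟨0, b₁, b₂, b₃⟩) (hhc : hc' = ⟨0, h₁, h₂, h₃⟩)
    (p : Quaternion ℝ) (hp : ‖p‖ = 1)
    (hpq : Quaternion ℝ) (hhp : hpq = p * bc * star p)
    (d : ℝ) (hd : d = hpq.imI * h₁ + hpq.imJ * h₂ + hpq.imK * h₃)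
    (hdne : d ≠ -1)
    (w₁ w₂ w₃ : ℝ)
    (hw₁ : w₁ = hpq.imJ * h₃ - hpq.imK * h₂)
    (hw₂ : w₂ = hpq.imK * h₁ - hpq.imI * h₃)
    (hw₃ : w₃ = hpq.imI * h₂ - hpq.imJ * h₁)
    (r : Quaternion ℝ)
    (hr : r = (sqrt (2 * (1 + d)))⁻¹ • (⟨1 + d, w₁, w₂, w₃⟩ : Quaternion ℝ)) :
    ‖r‖ = 1 ∧
    r * hpq = hc' * r ∧
    (sqrt (2 * (1 + d))) • r = 1 - hc' * p * bc * star p := by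
  -- star bc = -bc
  have hstarbc : star bc = -bc := by
    have e1 : bc.re = 0 := by rw [hbc]
    have e2 : bc.imI = b₁ := by rw [hbc]
    have e3 : bc.imJ = b₂ := by rw [hbc]
    have e4 : bc.imK = b₃ := by rw [hbc]
    ext <;> simp [e1]
  -- hpq is pure
  have hstarhpq : star hpq = -hpq := by
    rw [hhp]
    calc star (p * bc * star p) = p * star bc * star p := by
          simp [mul_assoc, star_mul]
      _ = -(p * bc * star p) := by rw [hstarbc]; simp [mul_neg, neg_mul]
  have hre : hpq.re = 0 := by
    have := congrArg QuaternionAlgebra.re hstarhpq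
    simp at this
    linarith
  -- norm of bc
  have hnbc : ‖bc‖ = 1 := by
    have : Quaternion.normSq bc = 1 := by
      rw [hbc]; erw [Quaternion.normSq_def']
      simpa using hb
    have h2 : ‖bc‖ * ‖bc‖ = 1 := by
      rw [← Quaternion.normSq_eq_norm_mul_self, this]
    rcases mul_self_eq_one_iff.mp h2 with h' | h'
    · exact h'
    · exact absurd h' (by have := norm_nonneg bc; intro hcon; rw [hcon] at this; linarith)
  have hnhpq : ‖hpq‖ = 1 := by
    rw [hhp, norm_mul, norm_mul, norm_star, hp, hnbc]; ring
  have hu : hpq.imI^2 + hpq.imJ^2 + hpq.imK^2 = 1 := by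
    have : Quaternion.normSq hpq = 1 := by
      rw [Quaternion.normSq_eq_norm_mul_self, hnhpq]; ring
    rw [Quaternion.normSq_def'] at this
    have : hpq.re^2 + hpq.imI^2 + hpq.imJ^2 + hpq.imK^2 = 1 := this
    rw [hre] at this; linarith
  set u₁ := hpq.imI with hu1
  set u₂ := hpq.imJ with hu2
  set u₃ := hpq.imK with hu3
  -- 1 + d > 0
  have hdpos : 0 < 1 + d := by
    have hge : 0 ≤ 2 * (1 + d) := by
      nlinarith [sq_nonneg (u₁ + h₁), sq_nonneg (u₂ + h₂), sq_nonneg (u₃ + h₃)]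
    rcases eq_or_lt_of_le hge with he | hl
    · exfalso; apply hdne; linarith
    · linarith
  have hs : sqrt (2 * (1 + d)) > 0 := Real.sqrt_pos.2 (by linarith)
  have hssq : sqrt (2 * (1 + d)) ^ 2 = 2 * (1 + d) :=
    Real.sq_sqrt (by linarith)
  -- w norm
  have hwsq : (1 + d)^2 + w₁^2 + w₂^2 + w₃^2 = 2 * (1 + d) := by
    rw [hw₁, hw₂, hw₃, hd]
    linear_combination (h₁^2 + h₂^2 + h₃^2) * hu + hh
  constructor
  · -- norm of r
    have hnq : Quaternion.normSq r = 1 := by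
      rw [hr]
      have : Quaternion.normSq ((sqrt (2 * (1 + d)))⁻¹ • (⟨1 + d, w₁, w₂, w₃⟩ : Quaternion ℝ))
          = (sqrt (2 * (1 + d)))⁻¹ ^ 2 * ((1+d)^2 + w₁^2 + w₂^2 + w₃^2) := by
        erw [Quaternion.normSq_def']
        simp [Quaternion.re_smul, Quaternion.imI_smul, Quaternion.imJ_smul, Quaternion.imK_smul, smul_eq_mul]
        ring
      rw [this, hwsq, inv_pow, hssq]
      field_simp
    have h2 : ‖r‖ * ‖r‖ = 1 := by rw [← Quaternion.normSq_eq_norm_mul_self, hnq]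
    rcases mul_self_eq_one_iff.mp h2 with h' | h'
    · exact h'
    · exact absurd h' (by have := norm_nonneg r; intro hcon; rw [hcon] at this; linarith)
  constructor
  · -- commutation
    obtain ⟨q, hq⟩ : ∃ q : Quaternion ℝ, q = ⟨1 + d, w₁, w₂, w₃⟩ := ⟨_, rfl⟩
    obtain ⟨v, hv⟩ : ∃ v : Quaternion ℝ, v = ⟨0, u₁, u₂, u₃⟩ := ⟨_, rfl⟩
    have hpqeq : hpq = v := by rw [hv]; ext <;> simp [hre, hu1, hu2, hu3]
    have key : q * v = hc' * q := by
      refine QuaternionAlgebra.ext ?_ ?_ ?_ ?_ <;>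
        simp only [Quaternion.re_mul, Quaternion.imI_mul, Quaternion.imJ_mul,
          Quaternion.imK_mul] <;> simp only [hq, hv, hhc, hd, hw₁, hw₂, hw₃]
      · ring
      · linear_combination h₁ * hu - u₁ * hh
      · linear_combination h₂ * hu - u₂ * hh
      · linear_combination h₃ * hu - u₃ * hh
    rw [show r = (sqrt (2 * (1 + d)))⁻¹ • q by subst hq; exact hr, hpqeq, smul_mul_assoc, mul_smul_comm, key]
  · -- scaled identity
    obtain ⟨q, hq⟩ : ∃ q : Quaternion ℝ, q = ⟨1 + d, w₁, w₂, w₃⟩ := ⟨_, rfl⟩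
    obtain ⟨v, hv⟩ : ∃ v : Quaternion ℝ, v = ⟨0, u₁, u₂, u₃⟩ := ⟨_, rfl⟩
    have hpqeq : hpq = v := by rw [hv]; ext <;> simp [hre, hu1, hu2, hu3]
    rw [show r = (sqrt (2 * (1 + d)))⁻¹ • q by subst hq; exact hr, smul_inv_smul₀ (ne_of_gt hs)]
    have hassoc : hc' * p * bc * star p = hc' * hpq := by rw [hhp, mul_assoc hc' p bc, mul_assoc hc' (p * bc) (star p)]
    rw [hassoc, hpqeq]
    refine QuaternionAlgebra.ext ?_ ?_ ?_ ?_ <;>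
      simp only [Quaternion.re_mul, Quaternion.imI_mul, Quaternion.imJ_mul,
        Quaternion.imK_mul, Quaternion.re_sub, Quaternion.imI_sub, Quaternion.imJ_sub,
        Quaternion.imK_sub, Quaternion.re_one, Quaternion.imI_one, Quaternion.imJ_one,
        Quaternion.imK_one] <;> simp only [hq, hv, hhc, hd, hw₁, hw₂, hw₃] <;>
      ring
end

section
/- Monotone approach to the feasibility cone: let h, k ∈ ℝ³ be unit vectors with ⟪h, k⟫ = 0, let p, q, r be unit quaternions such that q and r lie in the same feasibility cone (r = (c_r, s_r·h) ⊗ q for some c_r² + s_r² = 1 with c_r ≥ 0) and p' (x) = (cos(xΦ/2), sin(xΦ/2)·k) ⊗ p for x ∈ [0,1] with q = p'(1) (i.e., q = (cos(Φ/2), sin(Φ/2)·k) ⊗ p for some Φ ∈ [0, π]). Then the real part of r ⊗ p'(x)⁻¹ equals c_r·cos((1−x)Φ/2), which is monotonically non-decreasing in x on [0,1]; hence the rotation angle from p'(x) to r monotonically decreases as x goes from 0 to 1. -/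
open Real

theorem stmt17 (h₁ h₂ h₃ k₁ k₂ k₃ : ℝ)
    (hh : h₁^2 + h₂^2 + h₃^2 = 1) (hk : k₁^2 + k₂^2 + k₃^2 = 1)
    (hhk : h₁*k₁ + h₂*k₂ + h₃*k₃ = 0)
    (p : Quaternion ℝ) (hp : ‖p‖ = 1)
    (Φ : ℝ) (hΦ0 : 0 ≤ Φ) (hΦπ : Φ ≤ π)
    (rotk : ℝ → Quaternion ℝ)
    (hrotk : ∀ x : ℝ, rotk x =
      ⟨cos (x*Φ/2), sin (x*Φ/2) * k₁, sin (x*Φ/2) * k₂, sin (x*Φ/2) * k₃⟩)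
    (q : Quaternion ℝ) (hq : q = rotk 1 * p)
    (cr sr : ℝ) (hcs : cr^2 + sr^2 = 1) (hcr : 0 ≤ cr)
    (roth r : Quaternion ℝ)
    (hroth : roth = ⟨cr, sr * h₁, sr * h₂, sr * h₃⟩)
    (hr : r = roth * q)
    (p' : ℝ → Quaternion ℝ)
    (hp' : ∀ x : ℝ, p' x = rotk x * p) :
    (∀ x : ℝ, 0 ≤ x → x ≤ 1 → (r * star (p' x)).re = cr * cos ((1-x)*Φ/2)) ∧
    (∀ x y : ℝ, 0 ≤ x → x ≤ y → y ≤ 1 →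
      (r * star (p' x)).re ≤ (r * star (p' y)).re) := by
  have hnorm : p * star p = (1 : Quaternion ℝ) := by
    rw [Quaternion.self_mul_star]
    have : Quaternion.normSq p = 1 := by
      have := Quaternion.normSq_eq_norm_mul_self p
      rw [hp] at this; simpa using this
    rw [this]; norm_num
  have key : ∀ x : ℝ, (r * star (p' x)).re = cr * cos ((1-x)*Φ/2) := by
    intro x
    have : r * star (p' x) = roth * (rotk 1 * ((p * star p) * star (rotk x))) := by
      rw [hr, hq, hp']
      simp [mul_assoc, star_mul]
    rw [this, hnorm, one_mul]
    have harg : (1-x)*Φ/2 = 1*Φ/2 - x*Φ/2 := by ring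
    rw [harg, Real.cos_sub]
    simp only [Quaternion.re_mul, Quaternion.imI_mul, Quaternion.imJ_mul,
      Quaternion.imK_mul, Quaternion.re_star, Quaternion.imI_star,
      Quaternion.imJ_star, Quaternion.imK_star]
    rw [hroth, hrotk, hrotk]
    dsimp only
    linear_combination (cr * sin (1*Φ/2) * sin (x*Φ/2)) * hk +
      (sr * (cos (1*Φ/2) * sin (x*Φ/2) - cos (x*Φ/2) * sin (1*Φ/2))) * hhk
  refine ⟨fun x _ _ => key x, fun x y hx hxy hy1 => ?_⟩
  rw [key x, key y]
  apply mul_le_mul_of_nonneg_left _ hcr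
  apply Real.cos_le_cos_of_nonneg_of_le_pi
  · nlinarith
  · nlinarith [Real.pi_pos]
  · nlinarith
end

section
/- If h = (0,0,1) and b ∈ ℝ³ is a unit vector with b₃ ≠ −1, and p = (p₀,p₁,p₂,p₃) is a unit quaternion, then with κ = ((1+b₃)p₀ − b₁p₂ + b₂p₁)/(b₁p₁ + b₂p₂ + (1+b₃)p₃) (assuming the denominator is nonzero), the quaternion q = (κ(1+b₃), κb₂+b₁, −κb₁+b₂, 1+b₃)/√(2(1+κ²)(1+b₃)) is a unit quaternion satisfying q ⊗ b̌ = ȟ ⊗ q. The normalization uses the identity (1+b₃)² + b₁² + b₂² = 2(1+b₃). -/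
open Real

theorem stmt18 (b₁ b₂ b₃ : ℝ) (hb : b₁^2 + b₂^2 + b₃^2 = 1) (hb₃ : b₃ ≠ -1)
    (p₀ p₁ p₂ p₃ : ℝ) (p : Quaternion ℝ) (hp : p = ⟨p₀, p₁, p₂, p₃⟩) (hpn : ‖p‖ = 1)
    (hden : b₁*p₁ + b₂*p₂ + (1+b₃)*p₃ ≠ 0)
    (κ : ℝ)
    (hκ : κ = ((1+b₃)*p₀ - b₁*p₂ + b₂*p₁) / (b₁*p₁ + b₂*p₂ + (1+b₃)*p₃))
    (bc hc' : Quaternion ℝ)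
    (hbc : bc = ⟨0, b₁, b₂, b₃⟩) (hhc : hc' = ⟨0, 0, 0, 1⟩)
    (q : Quaternion ℝ)
    (hq : q = (sqrt (2 * (1+κ^2) * (1+b₃)))⁻¹ •
      (⟨κ*(1+b₃), κ*b₂ + b₁, -(κ*b₁) + b₂, 1+b₃⟩ : Quaternion ℝ)) :
    ‖q‖ = 1 ∧ q * bc = hc' * q ∧ (1+b₃)^2 + b₁^2 + b₂^2 = 2*(1+b₃) := by
  have hb3 : 0 < 1 + b₃ := by
    rcases lt_or_ge (1 + b₃) 0 with h | h
    · nlinarith [sq_nonneg b₁, sq_nonneg b₂, sq_nonneg (1 + b₃)]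
    · rcases h.lt_or_eq with h | h
      · exact h
      · exact absurd (by linarith) hb₃
  set w : Quaternion ℝ := (⟨κ*(1+b₃), κ*b₂ + b₁, -(κ*b₁) + b₂, 1+b₃⟩ : Quaternion ℝ) with hw
  replace hq : q = (sqrt (2 * (1+κ^2) * (1+b₃)))⁻¹ • w := hq
  have hX : (0:ℝ) < 2 * (1+κ^2) * (1+b₃) := by positivity
  have hnormSq : Quaternion.normSq w = 2 * (1+κ^2) * (1+b₃) := by
    rw [Quaternion.normSq_def']
    show (κ*(1+b₃))^2 + (κ*b₂ + b₁)^2 + (-(κ*b₁) + b₂)^2 + (1+b₃)^2 = _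
    nlinarith [hb]
  have hnw : ‖w‖ = sqrt (2 * (1+κ^2) * (1+b₃)) := by
    rw [← Real.sqrt_mul_self (norm_nonneg w), ← Quaternion.normSq_eq_norm_mul_self, hnormSq]
  constructor
  · rw [hq, norm_smul, hnw, norm_inv, Real.norm_eq_abs,
      abs_of_pos (Real.sqrt_pos.mpr hX)]
    exact inv_mul_cancel₀ (ne_of_gt (Real.sqrt_pos.mpr hX))
  refine ⟨?_, by nlinarith⟩
  rw [hq, smul_mul_assoc, mul_smul_comm]
  congr 1
  rw [hbc, hhc]
  ext
  · erw [Quaternion.re_mul, Quaternion.re_mul]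
    simp [Quaternion.re_mul, Quaternion.imI_mul, Quaternion.imJ_mul,
        Quaternion.imK_mul] <;>
        first
          | linear_combination κ*hb
          | linear_combination hb
          | linear_combination (-κ)*hb
          | linear_combination (-1:ℝ)*hb
          | ring
  · erw [Quaternion.imI_mul, Quaternion.imI_mul]
    simp [Quaternion.re_mul, Quaternion.imI_mul, Quaternion.imJ_mul,
        Quaternion.imK_mul] <;>
        first
          | linear_combination κ*hb
          | linear_combination hb
          | linear_combination (-κ)*hb
          | linear_combination (-1:ℝ)*hb
          | ring
  · erw [Quaternion.imJ_mul, Quaternion.imJ_mul]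
    simp [Quaternion.re_mul, Quaternion.imI_mul, Quaternion.imJ_mul,
        Quaternion.imK_mul] <;>
        first
          | linear_combination κ*hb
          | linear_combination hb
          | linear_combination (-κ)*hb
          | linear_combination (-1:ℝ)*hb
          | ring
  · erw [Quaternion.imK_mul, Quaternion.imK_mul]
    simp [Quaternion.re_mul, Quaternion.imI_mul, Quaternion.imJ_mul,
        Quaternion.imK_mul] <;>
        first
          | linear_combination κ*hb
          | linear_combination hb
          | linear_combination (-κ)*hb
          | linear_combination (-1:ℝ)*hb
          | ring
end

section
/- In the z-axis reference case (h = (0,0,1), unit vector b with b₃ ≠ −1, unit quaternion p with β = b₁p₁ + b₂p₂ + (1+b₃)p₃ ≠ 0, κ and q as in the closed-form estimate q = (κ(1+b₃), κb₂+b₁, −κb₁+b₂, 1+b₃)/√(2(1+κ²)(1+b₃))), the correction quaternion q ⊗ p⁻¹ has zero third vector component: the component of Im(q ⊗ p⁻¹) along (0,0,1) vanishes. -/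
open Real

theorem stmt19 (b₁ b₂ b₃ : ℝ) (hb : b₁^2 + b₂^2 + b₃^2 = 1) (hb₃ : b₃ ≠ -1)
    (p₀ p₁ p₂ p₃ : ℝ) (p : Quaternion ℝ) (hp : p = ⟨p₀, p₁, p₂, p₃⟩) (hpn : ‖p‖ = 1)
    (hden : b₁*p₁ + b₂*p₂ + (1+b₃)*p₃ ≠ 0)
    (κ : ℝ)
    (hκ : κ = ((1+b₃)*p₀ - b₁*p₂ + b₂*p₁) / (b₁*p₁ + b₂*p₂ + (1+b₃)*p₃))
    (q : Quaternion ℝ)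
    (hq : q = (sqrt (2 * (1+κ^2) * (1+b₃)))⁻¹ •
      (⟨κ*(1+b₃), κ*b₂ + b₁, -(κ*b₁) + b₂, 1+b₃⟩ : Quaternion ℝ)) :
    (q * star p).imK = 0 := by
  subst hq
  have hκ' : κ * (b₁*p₁ + b₂*p₂ + (1+b₃)*p₃) = (1+b₃)*p₀ - b₁*p₂ + b₂*p₁ := by
    rw [hκ]; exact div_mul_cancel₀ _ hden
  erw [Quaternion.imK_mul]
  simp only [Quaternion.imK_mul, Quaternion.re_star,
    Quaternion.imI_star, Quaternion.imJ_star, Quaternion.imK_star,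
    Quaternion.re_smul, Quaternion.imI_smul, Quaternion.imJ_smul, Quaternion.imK_smul, QuaternionAlgebra.smul_mk, smul_eq_mul]
  subst hp
  linear_combination -(√(2 * (1 + κ ^ 2) * (1 + b₃)))⁻¹ * hκ'
end
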